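/- Let f̄ ∈ 𝔽₃[x₁,…,x₅] be the reduction of f modulo 3. There exists exactly one 2-dimensional 𝔽₃-linear subspace W ⊆ 𝔽₃⁵ such that f̄ vanishes identically on W; equivalently, the cubic threefold X over 𝔽₃ contains exactly one line defined over 𝔽₃. -/

import Mathlib

open MvPolynomial

/-- The cubic form `f` of the paper, a homogeneous cubic in `ℤ[x₁,…,x₅]`
(variables indexed `0,…,4`). -/
noncomputable def cubicF : MvPolynomial (Fin 5) ℤ :=
  X 0 ^ 3 + 2 * X 0 ^ 2 * X 1 + 2 * X 0 * X 1 ^ 2 + X 0 ^ 2 * X 2 + 2 * X 0 * X 1 * X 2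
    + 2 * X 0 * X 2 ^ 2 + 2 * X 1 * X 2 ^ 2 + X 2 ^ 3 + X 0 ^ 2 * X 3 + 2 * X 0 * X 1 * X 3
    + X 1 ^ 2 * X 3 + X 1 * X 2 * X 3 + X 0 * X 3 ^ 2 + 2 * X 2 * X 3 ^ 2 + X 3 ^ 3
    + X 1 ^ 2 * X 4 + 2 * X 1 * X 2 * X 4 + 2 * X 2 ^ 2 * X 4 + X 0 * X 3 * X 4
    + X 1 * X 3 * X 4 + X 3 ^ 2 * X 4 + X 1 * X 4 ^ 2 + 2 * X 3 * X 4 ^ 2 + X 4 ^ 3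

/-- The reduction of `f` modulo 3. -/
noncomputable def cubicFbar : MvPolynomial (Fin 5) (ZMod 3) :=
  MvPolynomial.map (Int.castRingHom (ZMod 3)) cubicF

/-- Explicit polynomial function equal to evaluation of `cubicFbar`. -/
def gfun (x : Fin 5 → ZMod 3) : ZMod 3 :=
  x 0 ^ 3 + 2 * x 0 ^ 2 * x 1 + 2 * x 0 * x 1 ^ 2 + x 0 ^ 2 * x 2 + 2 * x 0 * x 1 * x 2
    + 2 * x 0 * x 2 ^ 2 + 2 * x 1 * x 2 ^ 2 + x 2 ^ 3 + x 0 ^ 2 * x 3 + 2 * x 0 * x 1 * x 3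
    + x 1 ^ 2 * x 3 + x 1 * x 2 * x 3 + x 0 * x 3 ^ 2 + 2 * x 2 * x 3 ^ 2 + x 3 ^ 3
    + x 1 ^ 2 * x 4 + 2 * x 1 * x 2 * x 4 + 2 * x 2 ^ 2 * x 4 + x 0 * x 3 * x 4
    + x 1 * x 3 * x 4 + x 3 ^ 2 * x 4 + x 1 * x 4 ^ 2 + 2 * x 3 * x 4 ^ 2 + x 4 ^ 3

lemma eval_eq_gfun (x : Fin 5 → ZMod 3) : MvPolynomial.eval x cubicFbar = gfun x := by
  simp [cubicFbar, cubicF, gfun]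

def lineU0 : Fin 5 → ZMod 3 := ![0, 1, 0, 0, 1]
def lineV0 : Fin 5 → ZMod 3 := ![1, 0, 0, 1, 1]

/-- Base-3 encoding of a vector in `𝔽₃⁵`. -/
def encV (x : Fin 5 → ZMod 3) : ℕ :=
  (x 0).val + 3 * (x 1).val + 9 * (x 2).val + 27 * (x 3).val + 81 * (x 4).val

/-- Code-level addition. -/
def addc (a b : ℕ) : ℕ :=
  (a % 3 + b % 3) % 3 + 3 * ((a / 3 % 3 + b / 3 % 3) % 3)
    + 9 * ((a / 9 % 3 + b / 9 % 3) % 3) + 27 * ((a / 27 % 3 + b / 27 % 3) % 3)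
    + 81 * ((a / 81 % 3 + b / 81 % 3) % 3)

def Zcodes : List ℕ :=
  [0, 3, 6, 12, 24, 29, 34, 44, 47, 48, 55, 59, 64, 69, 76, 83, 84, 95, 96, 106, 109,
   110, 111, 122, 127, 137, 143, 152, 157, 159, 163, 168, 176, 183, 187, 190, 193, 201,
   206, 211, 217, 218, 222, 227, 241]

def Wcodes : List ℕ := [0, 34, 59, 84, 109, 143, 168, 193, 218]

lemma digits5 (a0 a1 a2 a3 a4 : ℕ) (h0 : a0 < 3) (h1 : a1 < 3) (h2 : a2 < 3)
    (h3 : a3 < 3) (h4 : a4 < 3) :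
    (a0 + 3 * a1 + 9 * a2 + 27 * a3 + 81 * a4) % 3 = a0 ∧
    (a0 + 3 * a1 + 9 * a2 + 27 * a3 + 81 * a4) / 3 % 3 = a1 ∧
    (a0 + 3 * a1 + 9 * a2 + 27 * a3 + 81 * a4) / 9 % 3 = a2 ∧
    (a0 + 3 * a1 + 9 * a2 + 27 * a3 + 81 * a4) / 27 % 3 = a3 ∧
    (a0 + 3 * a1 + 9 * a2 + 27 * a3 + 81 * a4) / 81 % 3 = a4 :=
  ⟨by omega, by omega, by omega, by omega, by omega⟩

lemma encV_add (x y : Fin 5 → ZMod 3) : encV (x + y) = addc (encV x) (encV y) := by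
  obtain ⟨e0, e1, e2, e3, e4⟩ := digits5 (x 0).val (x 1).val (x 2).val (x 3).val (x 4).val
    (ZMod.val_lt _) (ZMod.val_lt _) (ZMod.val_lt _) (ZMod.val_lt _) (ZMod.val_lt _)
  obtain ⟨f0, f1, f2, f3, f4⟩ := digits5 (y 0).val (y 1).val (y 2).val (y 3).val (y 4).val
    (ZMod.val_lt _) (ZMod.val_lt _) (ZMod.val_lt _) (ZMod.val_lt _) (ZMod.val_lt _)
  simp only [encV, addc, Pi.add_apply, ZMod.val_add]
  rw [e0, e1, e2, e3, e4, f0, f1, f2, f3, f4]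

lemma encV_inj (x y : Fin 5 → ZMod 3) (h : encV x = encV y) : x = y := by
  obtain ⟨e0, e1, e2, e3, e4⟩ := digits5 (x 0).val (x 1).val (x 2).val (x 3).val (x 4).val
    (ZMod.val_lt _) (ZMod.val_lt _) (ZMod.val_lt _) (ZMod.val_lt _) (ZMod.val_lt _)
  obtain ⟨f0, f1, f2, f3, f4⟩ := digits5 (y 0).val (y 1).val (y 2).val (y 3).val (y 4).val
    (ZMod.val_lt _) (ZMod.val_lt _) (ZMod.val_lt _) (ZMod.val_lt _) (ZMod.val_lt _)
  simp only [encV] at h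
  have g0 : x 0 = y 0 := ZMod.val_injective 3 (by rw [← e0, ← f0, h])
  have g1 : x 1 = y 1 := ZMod.val_injective 3 (by rw [← e1, ← f1, h])
  have g2 : x 2 = y 2 := ZMod.val_injective 3 (by rw [← e2, ← f2, h])
  have g3 : x 3 = y 3 := ZMod.val_injective 3 (by rw [← e3, ← f3, h])
  have g4 : x 4 = y 4 := ZMod.val_injective 3 (by rw [← e4, ← f4, h])
  funext i
  fin_cases i <;> assumption

set_option maxRecDepth 40000 in
lemma L1 : ∀ a b : ZMod 3, gfun (a • lineU0 + b • lineV0) = 0 := by decide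

set_option maxRecDepth 40000 in
lemma L2 : ∀ s t : ZMod 3, s • lineU0 + t • lineV0 = 0 → s = 0 ∧ t = 0 := by decide

set_option maxRecDepth 40000 in
set_option maxHeartbeats 1000000 in
lemma LA2 : ∀ u : Fin 5 → ZMod 3, gfun u = 0 → encV u ∈ Zcodes := by decide

set_option maxRecDepth 40000 in
set_option maxHeartbeats 1000000 in
lemma LW : ∀ u : Fin 5 → ZMod 3, encV u ∈ Wcodes →
    ∃ a b : ZMod 3, a • lineU0 + b • lineV0 = u := by decide

set_option maxRecDepth 40000 in
set_option maxHeartbeats 1000000 in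
lemma natLB : ∀ c ∈ Zcodes, ∀ d ∈ Zcodes, c ≠ 0 → d ≠ 0 → d ≠ c → d ≠ addc c c →
    addc c d ∈ Zcodes → addc c (addc d d) ∈ Zcodes →
    c ∈ Wcodes ∧ d ∈ Wcodes := by decide

lemma range_pair {M : Type*} (u v : M) (f : Fin 2 → M) (h0 : f 0 = u) (h1 : f 1 = v) :
    Set.range f = {u, v} := by
  ext x
  constructor
  · rintro ⟨i, rfl⟩
    fin_cases i
    · left; exact h0
    · right; exact h1
  · rintro (rfl | rfl)
    exacts [⟨0, h0⟩, ⟨1, h1⟩]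

lemma three_torsion (w : Fin 5 → ZMod 3) : w + (w + w) = 0 := by
  funext i
  show w i + (w i + w i) = 0
  have : w i + (w i + w i) = 3 * w i := by ring
  rw [this, show (3 : ZMod 3) = 0 from rfl, zero_mul]

/-- There is exactly one 2-dimensional `𝔽₃`-linear subspace `W ⊆ 𝔽₃⁵` on which `f̄`
vanishes identically; equivalently, the cubic threefold `X` over `𝔽₃` contains exactly
one line defined over `𝔽₃`. -/
theorem cubic_unique_line_F3 :
    ∃! W : Submodule (ZMod 3) (Fin 5 → ZMod 3),
      Module.finrank (ZMod 3) W = 2 ∧ ∀ x ∈ W, MvPolynomial.eval x cubicFbar = 0 := by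
  classical
  set W0 : Submodule (ZMod 3) (Fin 5 → ZMod 3) :=
    Submodule.span (ZMod 3) {lineU0, lineV0} with hW0
  have hli : LinearIndependent (ZMod 3) ![lineU0, lineV0] :=
    LinearIndependent.pair_iff.mpr L2
  have hrange : Set.range ![lineU0, lineV0] = ({lineU0, lineV0} : Set (Fin 5 → ZMod 3)) :=
    range_pair lineU0 lineV0 _ rfl rfl
  have hfr : Module.finrank (ZMod 3) W0 = 2 := by
    rw [hW0, ← hrange, finrank_span_eq_card hli]
    simp
  have hvan : ∀ x ∈ W0, MvPolynomial.eval x cubicFbar = 0 := by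
    intro x hx
    rw [eval_eq_gfun]
    obtain ⟨a, b, rfl⟩ := Submodule.mem_span_pair.mp hx
    exact L1 a b
  refine ⟨W0, ⟨hfr, hvan⟩, ?_⟩
  rintro W ⟨h2, hv⟩
  haveI : FiniteDimensional (ZMod 3) W := Module.Finite.of_finite
  obtain ⟨b⟩ : Nonempty (Module.Basis (Fin 2) (ZMod 3) W) :=
    ⟨Module.finBasisOfFinrankEq (ZMod 3) W h2⟩
  set u : Fin 5 → ZMod 3 := (b 0 : Fin 5 → ZMod 3) with hu
  set v : Fin 5 → ZMod 3 := (b 1 : Fin 5 → ZMod 3) with hvdef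
  have hbu : u ∈ W := (b 0).2
  have hbv : v ∈ W := (b 1).2
  have hcomp : (W.subtype ∘ b) = ![u, v] := by
    funext i
    fin_cases i <;> rfl
  have hli' : LinearIndependent (ZMod 3) ![u, v] := by
    rw [← hcomp]
    exact b.linearIndependent.map' W.subtype W.ker_subtype
  have hindep : ∀ s t : ZMod 3, s • u + t • v = 0 → s = 0 ∧ t = 0 :=
    LinearIndependent.pair_iff.mp hli'
  have hspan : Submodule.span (ZMod 3) {u, v} = W := by
    have h1 : Submodule.span (ZMod 3) (Set.range (W.subtype ∘ b)) = W := by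
      rw [Set.range_comp, ← Submodule.map_span, b.span_eq, Submodule.map_top,
        Submodule.range_subtype]
    rwa [range_pair u v (W.subtype ∘ b) rfl rfl] at h1
  have hz : ∀ x ∈ W, gfun x = 0 := fun x hx => by rw [← eval_eq_gfun]; exact hv x hx
  -- nonvanishing / independence at code level
  have hu0 : u ≠ 0 := by
    intro h
    have := (hindep 1 0 (by rw [h]; simp)).1
    exact one_ne_zero this
  have hv0 : v ≠ 0 := by
    intro h
    have := (hindep 0 1 (by rw [h]; simp)).2
    exact one_ne_zero this
  have hvu : v ≠ u := by
    intro h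
    have h30 : (1 : ZMod 3) • u + (2 : ZMod 3) • v = 0 := by
      rw [h, ← add_smul, show (1 : ZMod 3) + 2 = 0 from rfl, zero_smul]
    exact one_ne_zero (hindep 1 2 h30).1
  have hv2u : v ≠ u + u := by
    intro h
    have : (1 : ZMod 3) • u + (1 : ZMod 3) • v = 0 := by
      rw [h, one_smul, one_smul, three_torsion]
    exact one_ne_zero (hindep 1 1 this).1
  -- feed the code-level lemma
  have enc0 : encV (0 : Fin 5 → ZMod 3) = 0 := rfl
  have hc0 : encV u ≠ 0 := fun h => hu0 (encV_inj u 0 (h.trans enc0.symm))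
  have hd0 : encV v ≠ 0 := fun h => hv0 (encV_inj v 0 (h.trans enc0.symm))
  have hdc : encV v ≠ encV u := fun h => hvu (encV_inj v u h)
  have hd2c : encV v ≠ addc (encV u) (encV u) := by
    intro h
    rw [← encV_add] at h
    exact hv2u (encV_inj v (u + u) h)
  have hsum1 : addc (encV u) (encV v) ∈ Zcodes := by
    rw [← encV_add]
    exact LA2 _ (hz _ (W.add_mem hbu hbv))
  have hsum2 : addc (encV u) (addc (encV v) (encV v)) ∈ Zcodes := by
    rw [← encV_add, ← encV_add]
    exact LA2 _ (hz _ (W.add_mem hbu (W.add_mem hbv hbv)))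
  obtain ⟨hcW, hdW⟩ := natLB (encV u) (LA2 u (hz u hbu)) (encV v) (LA2 v (hz v hbv))
    hc0 hd0 hdc hd2c hsum1 hsum2
  obtain ⟨a1, b1, hu1⟩ := LW u hcW
  obtain ⟨a2, b2, hv1⟩ := LW v hdW
  have hle : W ≤ W0 := by
    rw [← hspan]
    refine Submodule.span_le.mpr ?_
    rintro x (rfl | rfl)
    · exact Submodule.mem_span_pair.mpr ⟨a1, b1, hu1⟩
    · exact Submodule.mem_span_pair.mpr ⟨a2, b2, hv1⟩
  exact Submodule.eq_of_le_of_finrank_eq hle (h2.trans hfr.symm)
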